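/- For all positive integers n and nonnegative integers r, the sum ∑_{k=0}^{n-1} (2k+1)^{2r+1}·D_k is congruent to n modulo 2n, where D_k is the k-th central Delannoy number. -/

import Mathlib

open Finset

def delannoy (n : ℕ) : ℕ :=
  ∑ k ∈ Finset.range (n + 1), Nat.choose (n + k) (2 * k) * Nat.choose (2 * k) k

/-- auxiliary: the summand of the Delannoy number -/
def bb (j k : ℕ) : ℕ := Nat.choose (k + j) (2 * j) * Nat.choose (2 * j) j

lemma bb_eq_zero {j k : ℕ} (h : k < j) : bb j k = 0 := by
  unfold bb
  rw [Nat.choose_eq_zero_of_lt (by omega), zero_mul]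

-- L1a
lemma L1a (j k : ℕ) :
    (2*j+2) * ((2*j+1) * Nat.choose (k+j+1) (2*j+2)) = (k+j+1) * ((k-j) * Nat.choose (k+j) (2*j)) := by
  have h1 : (k+j+1) * Nat.choose (k+j) (2*j+1) = Nat.choose (k+j+1) (2*j+2) * (2*j+2) := by
    have := Nat.add_one_mul_choose_eq (k+j) (2*j+1)
    simpa [Nat.succ_eq_add_one] using this
  have h2 : Nat.choose (k+j) (2*j+1) * (2*j+1) = Nat.choose (k+j) (2*j) * (k - j) := by
    have := Nat.choose_succ_right_eq (k+j) (2*j)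
    have hs : k + j - 2*j = k - j := by omega
    rw [hs] at this
    exact this
  calc (2*j+2) * ((2*j+1) * Nat.choose (k+j+1) (2*j+2))
      = (Nat.choose (k+j+1) (2*j+2) * (2*j+2)) * (2*j+1) := by ring
    _ = ((k+j+1) * Nat.choose (k+j) (2*j+1)) * (2*j+1) := by rw [h1]
    _ = (k+j+1) * (Nat.choose (k+j) (2*j+1) * (2*j+1)) := by ring
    _ = (k+j+1) * (Nat.choose (k+j) (2*j) * (k-j)) := by rw [h2]
    _ = (k+j+1) * ((k-j) * Nat.choose (k+j) (2*j)) := by ring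

-- L1b
lemma L1b (j : ℕ) :
    (j+1)^2 * Nat.choose (2*j+2) (j+1) = (2*j+2) * ((2*j+1) * Nat.choose (2*j) j) := by
  have h1 : (2*j+2) * Nat.choose (2*j+1) j = Nat.choose (2*j+2) (j+1) * (j+1) := by
    have := Nat.add_one_mul_choose_eq (2*j+1) j
    simpa [Nat.succ_eq_add_one] using this
  have h2 : (2*j+1) * Nat.choose (2*j) j = Nat.choose (2*j+1) (j+1) * (j+1) := by
    have := Nat.add_one_mul_choose_eq (2*j) j
    simpa [Nat.succ_eq_add_one] using this
  have h3 : Nat.choose (2*j+1) (j+1) = Nat.choose (2*j+1) j := by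
    have := Nat.choose_symm (n := 2*j+1) (k := j+1) (by omega)
    simpa [show 2*j+1-(j+1) = j by omega] using this.symm
  calc (j+1)^2 * Nat.choose (2*j+2) (j+1)
      = (Nat.choose (2*j+2) (j+1) * (j+1)) * (j+1) := by ring
    _ = ((2*j+2) * Nat.choose (2*j+1) j) * (j+1) := by rw [h1]
    _ = ((2*j+2)) * ((Nat.choose (2*j+1) (j+1)) * (j+1)) := by rw [h3]; ring
    _ = (2*j+2) * ((2*j+1) * Nat.choose (2*j) j) := by rw [← h2]

-- L1c
lemma L1c (j k : ℕ) : (j+1)^2 * bb (j+1) k = (k+j+1) * ((k-j) * bb j k) := by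
  have key : (2*j+2) * ((2*j+1) * ((j+1)^2 * bb (j+1) k))
      = (2*j+2) * ((2*j+1) * ((k+j+1) * ((k-j) * bb j k))) := by
    unfold bb
    have e1 : 2*(j+1) = 2*j+2 := by ring
    rw [e1]
    calc (2*j+2) * ((2*j+1) * ((j+1)^2 * (Nat.choose (k+(j+1)) (2*j+2) * Nat.choose (2*j+2) (j+1))))
        = ((2*j+2) * ((2*j+1) * Nat.choose (k+j+1) (2*j+2))) * ((j+1)^2 * Nat.choose (2*j+2) (j+1)) := by
          rw [show k+(j+1) = k+j+1 by ring]; ring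
      _ = ((k+j+1) * ((k-j) * Nat.choose (k+j) (2*j))) * ((2*j+2) * ((2*j+1) * Nat.choose (2*j) j)) := by
          rw [L1a, L1b]
      _ = (2*j+2) * ((2*j+1) * ((k+j+1) * ((k-j) * (Nat.choose (k+j) (2*j) * Nat.choose (2*j) j)))) := by
          ring
  have h2 : 0 < (2*j+2) := by omega
  have h3 : 0 < (2*j+1) := by omega
  exact Nat.eq_of_mul_eq_mul_left h3 (Nat.eq_of_mul_eq_mul_left h2 key)

-- L1
lemma L1 (j k : ℕ) : k*(k+1) * bb j k = j*(j+1) * bb j k + (j+1)^2 * bb (j+1) k := by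
  rw [L1c]
  rcases Nat.lt_or_ge k j with h | h
  · rw [bb_eq_zero h]
    simp [Nat.sub_eq_zero_of_le (le_of_lt h)]
  · obtain ⟨d, rfl⟩ := Nat.le.dest h
    have hs : j + d - j = d := by omega
    rw [hs]
    ring

-- L2 : sum identity
lemma L2 (j n : ℕ) :
    ∑ k ∈ range n, (2*k+1) * bb j k
      = n * ((2*j+1) * (catalan j * Nat.choose (n+j) (2*j+1))) := by
  induction n with
  | zero => simp
  | succ n ih =>
    rw [Finset.sum_range_succ, ih]
    have hP : Nat.choose (n+1+j) (2*j+1) = Nat.choose (n+j) (2*j) + Nat.choose (n+j) (2*j+1) := by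
      have := Nat.choose_succ_succ' (n+j) (2*j)
      rw [show n+1+j = n+j+1 by ring]
      exact this
    rw [hP]
    rcases Nat.lt_or_ge n j with h | h
    · -- all relevant binomials vanish
      rw [bb_eq_zero h]
      rw [Nat.choose_eq_zero_of_lt (by omega), Nat.choose_eq_zero_of_lt (by omega)]
      simp
    · -- use key identities
      have hA : Nat.choose (n+j) (2*j+1) * (2*j+1) = Nat.choose (n+j) (2*j) * (n-j) := by
        have := Nat.choose_succ_right_eq (n+j) (2*j)
        rw [show n+j-2*j = n-j by omega] at this
        exact this
      have hC : Nat.choose (2*j) j = (j+1) * catalan j := by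
        have := succ_mul_catalan_eq_centralBinom j
        rw [Nat.centralBinom_eq_two_mul_choose] at this
        omega
      obtain ⟨d, rfl⟩ := Nat.le.dest h
      have hd : j + d - j = d := by omega
      unfold bb
      rw [hC]
      -- goal is now purely about choose (n+j) (2j) =: B and choose (n+j) (2j+1) =: A
      set A := Nat.choose (j+d+j) (2*j+1) with hAdef
      set B := Nat.choose (j+d+j) (2*j) with hBdef
      have hA' : A * (2*j+1) = B * d := by rw [hAdef, hBdef]; rw [hd] at hA; exact hA
      -- target: (j+d)*((2j+1)*(cat*A)) + (2(j+d)+1)*(B*((j+1)*cat))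
      --        = (j+d+1)*((2j+1)*(cat*(B+A)))
      -- expand using hA' : multiply out
      nlinarith [hA', sq_nonneg (A+B)]

-- L3 : divisibility for all powers of k(k+1)
lemma L3 (m : ℕ) : ∀ j n : ℕ, (n : ℕ) ∣ ∑ k ∈ range n, (2*k+1) * ((k*(k+1))^m * bb j k) := by
  induction m with
  | zero =>
    intro j n
    simp only [pow_zero, one_mul]
    exact ⟨_, L2 j n⟩
  | succ m ih =>
    intro j n
    have hsum : ∑ k ∈ range n, (2*k+1) * ((k*(k+1))^(m+1) * bb j k)
        = j*(j+1) * (∑ k ∈ range n, (2*k+1) * ((k*(k+1))^m * bb j k))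
          + (j+1)^2 * (∑ k ∈ range n, (2*k+1) * ((k*(k+1))^m * bb (j+1) k)) := by
      rw [Finset.mul_sum, Finset.mul_sum, ← Finset.sum_add_distrib]
      apply Finset.sum_congr rfl
      intro k _
      have : (k*(k+1))^(m+1) * bb j k = (k*(k+1))^m * (k*(k+1) * bb j k) := by ring
      rw [this, L1 j k]
      ring
    rw [hsum]
    exact Nat.dvd_add (Dvd.dvd.mul_left (ih j n) _) (Dvd.dvd.mul_left (ih (j+1) n) _)

-- delannoy in terms of bb, extended sum
lemma delannoy_eq (k n : ℕ) (h : k < n) :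
    delannoy k = ∑ j ∈ range n, bb j k := by
  unfold delannoy bb
  apply Finset.sum_subset (Finset.range_subset_range.2 (show k+1 ≤ n by omega))
  intro j _ hj
  simp only [Finset.mem_range, not_lt] at hj
  rw [Nat.choose_eq_zero_of_lt (by omega), zero_mul]

-- L4 : swap
lemma L4 (m n : ℕ) :
    ∑ k ∈ range n, (2*k+1) * ((k*(k+1))^m * delannoy k)
      = ∑ j ∈ range n, ∑ k ∈ range n, (2*k+1) * ((k*(k+1))^m * bb j k) := by
  rw [Finset.sum_comm]
  apply Finset.sum_congr rfl
  intro k hk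
  rw [delannoy_eq k n (Finset.mem_range.1 hk)]
  rw [Finset.mul_sum, Finset.mul_sum]

-- L5 : n divides V_m
lemma L5 (m n : ℕ) : (n:ℕ) ∣ ∑ k ∈ range n, (2*k+1) * ((k*(k+1))^m * delannoy k) := by
  rw [L4]
  exact Finset.dvd_sum fun j _ => L3 m j n

-- Lucas-type fact: parity of choose m (2^s - 1)
lemma FC : ∀ s m : ℕ, Nat.choose m (2^s - 1) % 2 = if m % 2^s = 2^s - 1 then 1 else 0 := by
  intro s
  induction s with
  | zero => intro m; simp [Nat.mod_one]
  | succ s ih =>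
    intro m
    have h1 : 1 ≤ 2^s := Nat.one_le_two_pow
    have hps : (2:ℕ)^(s+1) = 2^s * 2 := pow_succ 2 s
    have hk1 : (2^(s+1) - 1) % 2 = 1 := by omega
    have hk2 : (2^(s+1) - 1) / 2 = 2^s - 1 := by omega
    have H := Choose.choose_modEq_choose_mod_mul_choose_div_nat (p := 2) (n := m) (k := 2^(s+1)-1)
    rw [hk1, hk2] at H
    rcases Nat.mod_two_eq_zero_or_one m with hm | hm
    · rw [hm] at H
      simp only [Nat.choose_one_right] at H
      have : Nat.choose 0 1 = 0 := rfl
      rw [Nat.ModEq] at H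
      rw [H]
      have hcond : ¬ (m % 2^(s+1) = 2^(s+1) - 1) := by
        have h2 : (m % 2^(s+1)) % 2 = m % 2 := Nat.mod_mod_of_dvd m (by omega)
        omega
      simp [hcond, this]
    · rw [hm] at H
      rw [Nat.ModEq] at H
      have hc11 : Nat.choose 1 1 = 1 := rfl
      rw [H, hc11, one_mul, ih (m/2)]
      -- translate the condition
      set q := (m / 2) / 2^s with hq
      set r := (m / 2) % 2^s with hr
      have hrlt : r < 2^s := Nat.mod_lt _ (by omega)
      have hmr : m % 2^(s+1) = 2*r + 1 := by
        have h2 : 2^s * q + r = m / 2 := Nat.div_add_mod (m/2) (2^s)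
        have h3 : m = 2 * (m / 2) + 1 := by omega
        have h4 : m = 2^(s+1) * q + (2*r + 1) := by
          rw [hps]
          conv_lhs => rw [h3, ← h2]
          ring
        rw [h4, Nat.mul_add_mod]
        exact Nat.mod_eq_of_lt (by omega)
      have hcond : (m % 2^(s+1) = 2^(s+1) - 1) ↔ (r = 2^s - 1) := by omega
      by_cases hc : r = 2^s - 1
      · rw [if_pos hc, if_pos (hcond.mpr hc)]
      · rw [if_neg hc, if_neg (fun h => hc (hcond.mp h))]

-- symmetric sum splitting
lemma sym_sum_odd_len (f : ℕ → ℕ) (m : ℕ) (h : ∀ i ≤ 2*m, f i = f (2*m - i)) :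
    ∑ i ∈ range (2*m+1), f i = 2 * ∑ i ∈ range m, f i + f m := by
  have hsplit : ∑ i ∈ range (2*m+1), f i
      = ∑ i ∈ range (m+1), f i + ∑ i ∈ Finset.Ico (m+1) (2*m+1), f i := by
    rw [Finset.range_eq_Ico, ← Finset.sum_Ico_consecutive f
      (show 0 ≤ m+1 by omega) (show m+1 ≤ 2*m+1 by omega), ← Finset.range_eq_Ico]
  have h2 : ∑ i ∈ Finset.Ico (m+1) (2*m+1), f i = ∑ i ∈ range m, f i := by
    rw [Finset.sum_Ico_eq_sum_range, show 2*m+1 - (m+1) = m by omega]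
    calc ∑ i ∈ range m, f (m+1+i) = ∑ i ∈ range m, f (m - 1 - i) := by
          apply Finset.sum_congr rfl
          intro i hi
          simp only [Finset.mem_range] at hi
          rw [h (m+1+i) (by omega), show 2*m - (m+1+i) = m-1-i by omega]
      _ = ∑ i ∈ range m, f i := Finset.sum_range_reflect f m
  rw [hsplit, h2, Finset.sum_range_succ]
  ring

lemma sym_sum_even_len (f : ℕ → ℕ) (m : ℕ) (h : ∀ i ≤ 2*m+1, f i = f (2*m+1 - i)) :
    ∑ i ∈ range (2*m+2), f i = 2 * ∑ i ∈ range (m+1), f i := by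
  have hsplit : ∑ i ∈ range (2*m+2), f i
      = ∑ i ∈ range (m+1), f i + ∑ i ∈ Finset.Ico (m+1) (2*m+2), f i := by
    rw [Finset.range_eq_Ico, ← Finset.sum_Ico_consecutive f
      (show 0 ≤ m+1 by omega) (show m+1 ≤ 2*m+2 by omega), ← Finset.range_eq_Ico]
  have h2 : ∑ i ∈ Finset.Ico (m+1) (2*m+2), f i = ∑ i ∈ range (m+1), f i := by
    rw [Finset.sum_Ico_eq_sum_range, show 2*m+2 - (m+1) = m+1 by omega]
    calc ∑ i ∈ range (m+1), f (m+1+i) = ∑ i ∈ range (m+1), f (m+1-1-i) := by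
          apply Finset.sum_congr rfl
          intro i hi
          simp only [Finset.mem_range] at hi
          rw [h (m+1+i) (by omega), show 2*m+1 - (m+1+i) = m+1-1-i by omega]
      _ = ∑ i ∈ range (m+1), f i := Finset.sum_range_reflect f (m+1)
  rw [hsplit, h2]
  ring

lemma catalan_as_range (n : ℕ) :
    catalan (n+1) = ∑ i ∈ range (n+1), catalan i * catalan (n - i) := by
  rw [catalan_succ]
  exact Fin.sum_univ_eq_sum_range (fun i => catalan i * catalan (n-i)) (n+1)

-- catalan parity: key recursions
lemma catalan_odd_idx (m : ℕ) : catalan (2*m+1) % 2 = catalan m % 2 := by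
  have h := catalan_as_range (2*m)
  rw [sym_sum_odd_len (fun i => catalan i * catalan (2*m - i)) m ?hsym] at h
  · rw [h, show 2*m - m = m by omega]
    rcases Nat.mod_two_eq_zero_or_one (catalan m) with hc | hc <;>
      · rw [Nat.add_mod, Nat.mul_mod 2, Nat.mul_mod (catalan m), hc] <;> simp
  case hsym =>
    intro i hi
    rw [show 2*m - (2*m - i) = i by omega]
    ring

lemma catalan_even_idx (m : ℕ) : catalan (2*m+2) % 2 = 0 := by
  have h := catalan_as_range (2*m+1)
  rw [sym_sum_even_len (fun i => catalan i * catalan (2*m+1 - i)) m ?hsym] at h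
  · rw [h]; simp [Nat.mul_mod]
  case hsym =>
    intro i hi
    rw [show 2*m+1 - (2*m+1 - i) = i by omega]
    ring

-- catalan parity characterization
lemma cat_parity : ∀ j : ℕ, (catalan j % 2 = 1 ↔ ∃ t : ℕ, j + 1 = 2^t) := by
  intro j
  induction j using Nat.strong_induction_on with
  | _ j ih =>
    match j, ih with
    | 0, _ =>
      refine ⟨fun _ => ⟨0, rfl⟩, fun _ => by norm_num [catalan_zero]⟩
    | (j+1), ih =>
      rcases Nat.even_or_odd j with he | ho
      · -- j even: j = 2m, index j+1 = 2m+1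
        obtain ⟨m, hm⟩ := he
        have hm2 : j = 2*m := by omega
        subst hm2
        rw [catalan_odd_idx m, ih m (by omega)]
        constructor
        · rintro ⟨t, ht⟩
          exact ⟨t+1, by rw [pow_succ]; omega⟩
        · rintro ⟨t, ht⟩
          rcases t with _ | t
          · omega
          · exact ⟨t, by rw [pow_succ] at ht; omega⟩
      · -- j odd: j = 2m+1, index j+1 = 2m+2
        obtain ⟨m, hm⟩ := ho
        subst hm
        rw [catalan_even_idx m]
        constructor
        · intro h; omega
        · rintro ⟨t, ht⟩
          rcases t with _ | t
          · omega
          · exfalso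
            rw [pow_succ] at ht
            omega

-- uniqueness of the 2-adic valuation
lemma pow2_odd_unique : ∀ t s b u : ℕ, 2^t*(2*b+1) = 2^s*(2*u+1) → t = s := by
  intro t
  induction t with
  | zero =>
    intro s b u h
    cases s with
    | zero => rfl
    | succ s =>
      exfalso
      have h2 : (2:ℕ)^(s+1)*(2*u+1) = 2*(2^s*(2*u+1)) := by ring
      simp only [pow_zero, one_mul] at h
      omega
  | succ t ih =>
    intro s b u h
    cases s with
    | zero =>
      exfalso
      have h2 : (2:ℕ)^(t+1)*(2*b+1) = 2*(2^t*(2*b+1)) := by ring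
      simp only [pow_zero, one_mul] at h
      omega
    | succ s =>
      have h2 : (2:ℕ)^(t+1)*(2*b+1) = 2*(2^t*(2*b+1)) := by ring
      have h3 : (2:ℕ)^(s+1)*(2*u+1) = 2*(2^s*(2*u+1)) := by ring
      have h4 : 2^t*(2*b+1) = 2^s*(2*u+1) := by omega
      exact congrArg Nat.succ (ih s b u h4)

-- the parity of W
lemma L6 (n : ℕ) (hn : 0 < n) :
    (∑ j ∈ range n, (2*j+1) * (catalan j * Nat.choose (n+j) (2*j+1))) % 2 = 1 := by
  obtain ⟨t0, q0, hq0, hn0⟩ := Nat.exists_eq_pow_mul_and_not_dvd (show n ≠ 0 by omega) 2 (by norm_num)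
  obtain ⟨u0, hu0⟩ : ∃ u, q0 = 2*u+1 := ⟨q0/2, by omega⟩
  have hP1 : 1 ≤ 2^t0 := Nat.one_le_two_pow
  set J := 2^t0 - 1 with hJ
  have hJn : J < n := by
    have : 2^t0 ≤ 2^t0 * q0 := Nat.le_mul_of_pos_right _ (by omega)
    omega
  have hterm : ∀ j ∈ range n,
      ((2*j+1) * (catalan j * Nat.choose (n+j) (2*j+1))) % 2 = if j = J then 1 else 0 := by
    intro j hj
    have hmod : ((2*j+1) * (catalan j * Nat.choose (n+j) (2*j+1))) % 2
        = ((catalan j % 2) * (Nat.choose (n+j) (2*j+1) % 2)) % 2 := by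
      have h21 : (2*j+1) % 2 = 1 := by omega
      rw [Nat.mul_mod, h21, one_mul, Nat.mod_mod, Nat.mul_mod]
    rw [hmod]
    by_cases hcat : catalan j % 2 = 1
    · obtain ⟨t, ht⟩ := (cat_parity j).mp hcat
      have hjt : j = 2^t - 1 := by omega
      have hPt : 1 ≤ 2^t := Nat.one_le_two_pow
      have harg : 2*j+1 = 2^(t+1) - 1 := by
        have : (2:ℕ)^(t+1) = 2^t * 2 := pow_succ 2 t
        omega
      rw [hcat, one_mul, harg, FC (t+1) (n+j)]
      by_cases hJ' : j = J
      · -- t = t0 and condition holds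
        have htt0 : t = t0 := by
          have : (2:ℕ)^t = 2^t0 := by omega
          exact Nat.pow_right_injective (le_refl 2) this
        subst htt0
        have hcond : (n+j) % 2^(t+1) = 2^(t+1) - 1 := by
          have hM : (2:ℕ)^(t+1) = 2*2^t := by rw [pow_succ]; ring
          have e1 : n + 2^t = 2^(t+1)*u0 + 2^(t+1) := by
            rw [hn0, hu0, hM]; ring
          have hlt : (2:ℕ)^(t+1) - 1 < 2^(t+1) := by omega
          have e2 : n + j = 2^(t+1)*u0 + (2^(t+1) - 1) := by omega
          rw [e2, Nat.mul_add_mod]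
          exact Nat.mod_eq_of_lt hlt
        rw [if_pos hcond, if_pos hJ']
      · -- t ≠ t0 and condition fails
        have hcond : ¬ ((n+j) % 2^(t+1) = 2^(t+1) - 1) := by
          intro hc
          have hM : (2:ℕ)^(t+1) = 2*2^t := by rw [pow_succ]; ring
          have hdm := Nat.div_add_mod (n+j) (2^(t+1))
          set c := (n+j) / 2^(t+1) with hc'
          rw [hc] at hdm
          -- n + j = 2^(t+1)*c + 2^(t+1) - 1 , j = 2^t - 1  ⇒ n = 2^(t+1)*c + 2^t
          have hn' : n = 2^(t+1)*c + 2^t := by omega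
          have hn'' : 2^t*(2*c+1) = 2^t0*(2*u0+1) := by
            rw [← hu0, ← hn0, hn', hM]; ring
          have htt : t = t0 := pow2_odd_unique t t0 c u0 hn''
          exact hJ' (by rw [hjt, hJ, htt])
        rw [if_neg hcond, if_neg hJ']
    · have hcat0 : catalan j % 2 = 0 := by omega
      rw [hcat0, zero_mul]
      have hJ' : j ≠ J := by
        intro h
        apply hcat
        exact (cat_parity j).mpr ⟨t0, by omega⟩
      rw [if_neg hJ']
      rfl
  rw [Finset.sum_nat_mod, Finset.sum_congr rfl hterm, Finset.sum_ite_eq' (range n) J (fun _ => 1),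
    if_pos (Finset.mem_range.mpr hJn)]

theorem stmt13 (n : ℕ) (hn : 0 < n) (r : ℕ) :
    (∑ k ∈ Finset.range n, (2 * k + 1) ^ (2 * r + 1) * delannoy k) ≡ n [MOD 2 * n] := by
  -- Step 1: binomial expansion of the odd power
  have hk : ∀ k : ℕ, (2*k+1)^(2*r+1) * delannoy k
      = ∑ m ∈ range (r+1), (Nat.choose r m * 4^m) * ((2*k+1) * ((k*(k+1))^m * delannoy k)) := by
    intro k
    have h1 : (2*k+1)^(2*r+1) = (4*(k*(k+1))+1)^r * (2*k+1) := by
      rw [pow_succ, pow_mul]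
      congr 2
      ring
    have h2 : (4*(k*(k+1))+1)^r
        = ∑ m ∈ range (r+1), (4*(k*(k+1)))^m * 1^(r-m) * Nat.choose r m := add_pow _ _ _
    rw [h1, h2, Finset.sum_mul, Finset.sum_mul]
    apply Finset.sum_congr rfl
    intro m _
    rw [mul_pow]
    ring
  rw [Finset.sum_congr rfl (fun k _ => hk k), Finset.sum_comm]
  -- Step 2: factor out constants
  have hfac : ∀ m ∈ range (r+1),
      ∑ k ∈ range n, (Nat.choose r m * 4^m) * ((2*k+1) * ((k*(k+1))^m * delannoy k))
      = (Nat.choose r m * 4^m) * (∑ k ∈ range n, (2*k+1) * ((k*(k+1))^m * delannoy k)) := by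
    intro m _
    rw [Finset.mul_sum]
  rw [Finset.sum_congr rfl hfac]
  -- Step 3: split off m = 0
  rw [Finset.sum_range_succ']
  -- Step 4: tail divisible by 2n
  have htail : 2*n ∣ ∑ m ∈ range r,
      (Nat.choose r (m+1) * 4^(m+1)) * (∑ k ∈ range n, (2*k+1) * ((k*(k+1))^(m+1) * delannoy k)) := by
    apply Finset.dvd_sum
    intro m _
    obtain ⟨t, ht⟩ := L5 (m+1) n
    rw [ht]
    exact ⟨Nat.choose r (m+1) * (2 * 4^m) * t, by rw [pow_succ]; ring⟩
  -- Step 5: the m = 0 term equals n * W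
  have hV0 : (Nat.choose r 0 * 4^0) * (∑ k ∈ range n, (2*k+1) * ((k*(k+1))^0 * delannoy k))
      = n * (∑ j ∈ range n, (2*j+1) * (catalan j * Nat.choose (n+j) (2*j+1))) := by
    rw [Nat.choose_zero_right, pow_zero, one_mul, one_mul, L4, Finset.mul_sum]
    apply Finset.sum_congr rfl
    intro j _
    have := L2 j n
    simp only [pow_zero, one_mul] at this ⊢
    rw [this]
  rw [hV0]
  -- Step 6: conclude
  set W := ∑ j ∈ range n, (2*j+1) * (catalan j * Nat.choose (n+j) (2*j+1)) with hW
  have hWodd : W ≡ 1 [MOD 2] := by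
    show W % 2 = 1 % 2
    rw [L6 n hn]
  have h1 : n * W ≡ n * 1 [MOD n * 2] := hWodd.mul_left' n
  have h2 : n * W ≡ n [MOD 2 * n] := by
    rw [mul_comm 2 n]
    simpa using h1
  calc (∑ m ∈ range r, (Nat.choose r (m+1) * 4^(m+1)) * (∑ k ∈ range n, (2*k+1) * ((k*(k+1))^(m+1) * delannoy k))) + n * W
      ≡ 0 + n * W [MOD 2*n] := Nat.ModEq.add ((Nat.modEq_zero_iff_dvd).mpr htail) (Nat.ModEq.refl _)
    _ = n * W := by rw [zero_add]
    _ ≡ n [MOD 2*n] := h2
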